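/- arXiv:1706.00983 — 2 statements merged into one kernel-verified Lean document; each statement's English description precedes it below -/
import Mathlib

section
/- Every non-identity morphism in the category Nec of necklaces is a composition of morphisms of the following three types: (i) injective necklace morphisms f: T → T' with dim(T') − dim(T) = 1; (ii) morphisms f = f_1 ∨ ⋯ ∨ f_k between necklaces Δ^{n_1} ∨ ⋯ ∨ Δ^{n_k} → Δ^{m_1} ∨ ⋯ ∨ Δ^{m_k} with the same number of beads such that for exactly one index p with n_p ≥ 2 the map f_p is a simplicial codegeneracy s^j: Δ^{n_p} → Δ^{n_p − 1} and all other f_i are identity maps of standard simplices; (iii) morphisms f: Δ^{n_1} ∨ ⋯ ∨ Δ^{n_k} → Δ^{n_1} ∨ ⋯ ∨ Δ^{n_{p−1}} ∨ Δ^{n_{p+1}} ∨ ⋯ ∨ Δ^{n_k} (k ≥ 2) which collapse the p-th bead Δ^{n_p} to the last vertex of Δ^{n_{p−1}} (equivalently the first vertex of Δ^{n_{p+1}}) and are injective on all other beads. -/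
/-!  Necklaces, modeled skeletally: a necklace `Δ^{n_1} ∨ ⋯ ∨ Δ^{n_k}` (all `n_i ≥ 1`) is
recorded by its total number of vertices `N + 1` (so it sits inside `Δ^N`) together with the
set `J` of "joint" vertices (the wedge points together with the first and the last vertex);
the beads are the intervals between consecutive joints.  A morphism of necklaces is a
monotone vertex map preserving the first and last vertices and sending each bead into a
bead; this is exactly a simplicial map of the corresponding simplicial sets preserving the
first and the last vertex. -/

structure Necklace where
  N : ℕ
  pos : 0 < N
  J : Finset (Fin (N + 1))
  zero_mem : (0 : Fin (N + 1)) ∈ J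
  last_mem : Fin.last N ∈ J

namespace Necklace

/-- Number of beads. -/
def beads (T : Necklace) : ℕ := T.J.card - 1

/-- Dimension `n_1 + ⋯ + n_k − k` of a necklace. -/
def dim (T : Necklace) : ℕ := T.N + 1 - T.J.card

/-- `(a, b)` is a pair of consecutive joints, i.e. the pair of end vertices of a bead. -/
def IsBead (T : Necklace) (a b : Fin (T.N + 1)) : Prop :=
  a ∈ T.J ∧ b ∈ T.J ∧ a < b ∧ ∀ c ∈ T.J, c ≤ a ∨ b ≤ c

/-- Morphisms of necklaces: monotone vertex maps preserving first and last vertices and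
mapping every bead into a bead.  (Such data is the same thing as a map of simplicial sets
between the corresponding wedges of simplices preserving first and last vertices.) -/
structure Hom (T T' : Necklace) where
  f : Fin (T.N + 1) →o Fin (T'.N + 1)
  map_zero : f 0 = 0
  map_last : f (Fin.last T.N) = Fin.last T'.N
  map_bead : ∀ a b : Fin (T.N + 1), T.IsBead a b → ∃ a' b' : Fin (T'.N + 1),
      T'.IsBead a' b' ∧ ∀ v, a ≤ v → v ≤ b → a' ≤ f v ∧ f v ≤ b'

/-- The identity morphism of a necklace. -/
def Hom.id (T : Necklace) : Hom T T :=
  ⟨OrderHom.id, rfl, rfl, fun a b h => ⟨a, b, h, fun _ h1 h2 => ⟨h1, h2⟩⟩⟩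

/-- Composition of necklace morphisms. -/
def Hom.comp {T T' T'' : Necklace} (g : Hom T' T'') (φ : Hom T T') : Hom T T'' where
  f := g.f.comp φ.f
  map_zero := by
    show g.f (φ.f 0) = 0
    rw [φ.map_zero, g.map_zero]
  map_last := by
    show g.f (φ.f (Fin.last T.N)) = Fin.last T''.N
    rw [φ.map_last, g.map_last]
  map_bead := by
    intro a b h
    obtain ⟨a', b', h', hf⟩ := φ.map_bead a b h
    obtain ⟨a'', b'', h'', hg⟩ := g.map_bead a' b' h'
    exact ⟨a'', b'', h'', fun v h1 h2 =>
      hg (φ.f v) (hf v h1 h2).1 (hf v h1 h2).2⟩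

/-- Type (i): injective necklace morphisms raising the dimension by exactly one. -/
def TypeI {T T' : Necklace} (φ : Hom T T') : Prop :=
  Function.Injective φ.f ∧ T'.dim = T.dim + 1

/-- Type (ii): morphisms of the form `f_1 ∨ ⋯ ∨ f_k` between necklaces with the same number
of beads, where for exactly one `p` with `n_p ≥ 2` the map `f_p` is a simplicial
codegeneracy `s^j : Δ^{n_p} → Δ^{n_p − 1}` (i.e. exactly one pair of adjacent vertices,
lying in a bead of dimension `≥ 2`, is identified) and all the other `f_i` are identities. -/
def TypeII {T T' : Necklace} (φ : Hom T T') : Prop :=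
  T.beads = T'.beads ∧
  Function.Surjective φ.f ∧
  T'.J = T.J.image φ.f ∧
  ∃ v : Fin T.N,
    (φ.f v.castSucc = φ.f v.succ ∧
      ∃ a b : Fin (T.N + 1), T.IsBead a b ∧ a ≤ v.castSucc ∧ v.succ ≤ b ∧
        2 ≤ (b : ℕ) - (a : ℕ)) ∧
    ∀ w : Fin T.N, φ.f w.castSucc = φ.f w.succ → w = v

/-- Type (iii): morphisms collapsing the `p`-th bead to a vertex (which is the last vertex
of the `(p−1)`-st bead, equivalently the first vertex of the `(p+1)`-st bead of the target)
and injective on all the other beads; the domain is required to have at least two beads. -/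
def TypeIII {T T' : Necklace} (φ : Hom T T') : Prop :=
  2 ≤ T.beads ∧
  Function.Surjective φ.f ∧
  T'.J = T.J.image φ.f ∧
  ∃ a b : Fin (T.N + 1), T.IsBead a b ∧
    ∀ v w : Fin (T.N + 1), φ.f v = φ.f w ↔
      (v = w ∨ ((a ≤ v ∧ v ≤ b) ∧ (a ≤ w ∧ w ≤ b)))

/-- `IsCompositeOf P f` : the morphism `f` is a (nonempty) composite of morphisms each of
which satisfies the predicate `P`. -/
inductive IsCompositeOf (P : ∀ ⦃T T' : Necklace⦄, Hom T T' → Prop) :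
    ∀ ⦃T T' : Necklace⦄, Hom T T' → Prop
  | of {T T' : Necklace} (φ : Hom T T') : P φ → IsCompositeOf P φ
  | comp {T T' T'' : Necklace} (φ : Hom T T') (g : Hom T' T'') :
      P φ → IsCompositeOf P g → IsCompositeOf P (g.comp φ)

end Necklace
namespace Necklace

theorem Hom.ext' {T T' : Necklace} {φ ψ : Hom T T'} (h : ∀ x, φ.f x = ψ.f x) : φ = ψ := by
  obtain ⟨f, _, _, _⟩ := φ
  obtain ⟨g, _, _, _⟩ := ψ
  have : f = g := OrderHom.ext _ _ (funext h)
  subst this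
  rfl

theorem card_J_le (T : Necklace) : T.J.card ≤ T.N + 1 := by
  have := Finset.card_le_univ T.J
  simpa using this

theorem exists_bead_cover (T : Necklace) (x y : Fin (T.N + 1)) (hxy : x ≤ y)
    (hmid : ∀ c ∈ T.J, c ≤ x ∨ y ≤ c) :
    ∃ a b, T.IsBead a b ∧ a ≤ x ∧ y ≤ b := by
  rcases lt_or_eq_of_le hxy with hlt | rfl
  · have hA : (T.J.filter (· ≤ x)).Nonempty :=
      ⟨0, Finset.mem_filter.2 ⟨T.zero_mem, Fin.zero_le x⟩⟩
    have hB : (T.J.filter (y ≤ ·)).Nonempty :=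
      ⟨Fin.last T.N, Finset.mem_filter.2 ⟨T.last_mem, Fin.le_last y⟩⟩
    have haJ := Finset.mem_filter.1 ((T.J.filter (· ≤ x)).max'_mem hA)
    have hbJ := Finset.mem_filter.1 ((T.J.filter (y ≤ ·)).min'_mem hB)
    refine ⟨(T.J.filter (· ≤ x)).max' hA, (T.J.filter (y ≤ ·)).min' hB, ⟨haJ.1, hbJ.1, lt_of_le_of_lt haJ.2 (lt_of_lt_of_le hlt hbJ.2), ?_⟩,
      haJ.2, hbJ.2⟩
    intro c hc
    rcases hmid c hc with h | h
    · exact Or.inl (Finset.le_max' (T.J.filter (· ≤ x)) _ (Finset.mem_filter.2 ⟨hc, h⟩))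
    · exact Or.inr (Finset.min'_le (T.J.filter (y ≤ ·)) _ (Finset.mem_filter.2 ⟨hc, h⟩))
  · by_cases hxl : x < Fin.last T.N
    · have hA : (T.J.filter (· ≤ x)).Nonempty :=
        ⟨0, Finset.mem_filter.2 ⟨T.zero_mem, Fin.zero_le x⟩⟩
      have hB : (T.J.filter (x < ·)).Nonempty :=
        ⟨Fin.last T.N, Finset.mem_filter.2 ⟨T.last_mem, hxl⟩⟩
      have haJ := Finset.mem_filter.1 ((T.J.filter (· ≤ x)).max'_mem hA)
      have hbJ := Finset.mem_filter.1 ((T.J.filter (x < ·)).min'_mem hB)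
      refine ⟨(T.J.filter (· ≤ x)).max' hA, (T.J.filter (x < ·)).min' hB, ⟨haJ.1, hbJ.1, lt_of_le_of_lt haJ.2 hbJ.2, ?_⟩, haJ.2, hbJ.2.le⟩
      intro c hc
      rcases le_or_gt c x with h | h
      · exact Or.inl (Finset.le_max' (T.J.filter (· ≤ x)) _ (Finset.mem_filter.2 ⟨hc, h⟩))
      · exact Or.inr (Finset.min'_le (T.J.filter (x < ·)) _ (Finset.mem_filter.2 ⟨hc, h⟩))
    · have hxe : x = Fin.last T.N := le_antisymm (Fin.le_last x) (not_lt.1 hxl)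
      have hA : (T.J.filter (· < x)).Nonempty := by
        refine ⟨0, Finset.mem_filter.2 ⟨T.zero_mem, ?_⟩⟩
        rw [hxe, Fin.lt_def]
        simpa using T.pos
      have haJ := Finset.mem_filter.1 ((T.J.filter (· < x)).max'_mem hA)
      refine ⟨(T.J.filter (· < x)).max' hA, x, ⟨haJ.1, hxe ▸ T.last_mem, haJ.2, ?_⟩, haJ.2.le, le_rfl⟩
      intro c hc
      rcases lt_or_ge c x with h | h
      · exact Or.inl (Finset.le_max' (T.J.filter (· < x)) _ (Finset.mem_filter.2 ⟨hc, h⟩))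
      · exact Or.inr h

theorem joint_mem_image {T T' : Necklace} (φ : Hom T T') :
    ∀ c' ∈ T'.J, ∃ c ∈ T.J, φ.f c = c' := by
  intro j' hj'
  have hS : (T.J.filter (fun c => φ.f c ≤ j')).Nonempty :=
    ⟨0, Finset.mem_filter.2 ⟨T.zero_mem, by rw [φ.map_zero]; exact Fin.zero_le j'⟩⟩
  set c := (T.J.filter (fun c => φ.f c ≤ j')).max' hS with hcdef
  have hcm := Finset.mem_filter.1 ((T.J.filter (fun c => φ.f c ≤ j')).max'_mem hS)
  rcases eq_or_lt_of_le hcm.2 with heq | hlt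
  · exact ⟨c, hcm.1, heq⟩
  exfalso
  have hcl : c < Fin.last T.N := by
    rcases lt_or_eq_of_le (Fin.le_last c) with h | h
    · exact h
    · exfalso
      have := φ.map_last
      rw [← h] at this
      rw [this] at hlt
      exact absurd (Fin.le_last j') (not_le.2 hlt)
  have hB : (T.J.filter (c < ·)).Nonempty :=
    ⟨Fin.last T.N, Finset.mem_filter.2 ⟨T.last_mem, hcl⟩⟩
  have hdm := Finset.mem_filter.1 ((T.J.filter (c < ·)).min'_mem hB)
  set d := (T.J.filter (c < ·)).min' hB with hddef
  have hbead : T.IsBead c d := by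
    refine ⟨hcm.1, hdm.1, hdm.2, ?_⟩
    intro e he
    rcases le_or_gt e c with h | h
    · exact Or.inl h
    · exact Or.inr (Finset.min'_le (T.J.filter (c < ·)) _ (Finset.mem_filter.2 ⟨he, h⟩))
  obtain ⟨a', b', hbead', hcov⟩ := φ.map_bead c d hbead
  have h1 := (hcov c le_rfl hbead.2.2.1.le).1
  have h2 := (hcov d hbead.2.2.1.le le_rfl).2
  have hd' : j' < φ.f d := by
    by_contra h
    push_neg at h
    have : d ≤ c := Finset.le_max' (T.J.filter (fun c => φ.f c ≤ j')) _ (Finset.mem_filter.2 ⟨hdm.1, h⟩)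
    exact absurd hdm.2 (not_lt.2 this)
  rcases hbead'.2.2.2 j' hj' with h | h
  · exact lt_irrefl j' (lt_of_le_of_lt h (lt_of_le_of_lt h1 hlt))
  · exact lt_irrefl j' ((hd'.trans_le h2).trans_le h)

theorem map_bead_of_image {T T₁ : Necklace} (f : Fin (T.N + 1) →o Fin (T₁.N + 1))
    (hJ : ∀ c' ∈ T₁.J, ∃ c ∈ T.J, f c = c') :
    ∀ a b : Fin (T.N + 1), T.IsBead a b → ∃ a' b' : Fin (T₁.N + 1), T₁.IsBead a' b' ∧
      ∀ v, a ≤ v → v ≤ b → a' ≤ f v ∧ f v ≤ b' := by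
  intro a b hab
  have hmid : ∀ c' ∈ T₁.J, c' ≤ f a ∨ f b ≤ c' := by
    intro c' hc'
    obtain ⟨c, hc, rfl⟩ := hJ c' hc'
    rcases hab.2.2.2 c hc with h | h
    · exact Or.inl (f.mono h)
    · exact Or.inr (f.mono h)
  obtain ⟨a', b', hbead, h1, h2⟩ := exists_bead_cover T₁ (f a) (f b) (f.mono hab.2.2.1.le) hmid
  exact ⟨a', b', hbead, fun x hx1 hx2 => ⟨h1.trans (f.mono hx1), (f.mono hx2).trans h2⟩⟩

end Necklace
namespace Necklace

/-- Auxiliary measure for the induction. -/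
def mu {T T' : Necklace} (φ : Hom T T') : ℕ :=
  (T.N + 1 - (Finset.image φ.f Finset.univ).card)
    + (T'.N + 1 - (Finset.image φ.f Finset.univ).card)
    + ((T.J.image φ.f).card - T'.J.card)

/-- The vertex map collapsing `v` and `v+1`. -/
def colF {N : ℕ} (v : ℕ) (hv : v + 1 ≤ N) : Fin (N + 1) →o Fin (N - 1 + 1) :=
  ⟨fun x => ⟨if x.val ≤ v then x.val else x.val - 1, by
      have := x.isLt; split_ifs <;> omega⟩,
    fun x y hxy => by
      simp only [Fin.mk_le_mk]; rw [Fin.le_def] at hxy; split_ifs <;> omega⟩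

@[simp] theorem colF_val {N : ℕ} (v : ℕ) (hv : v + 1 ≤ N) (x : Fin (N + 1)) :
    (colF v hv x).val = if x.val ≤ v then x.val else x.val - 1 := rfl

/-- The section of `colF`. -/
def liftF {N : ℕ} (v : ℕ) : Fin (N - 1 + 1) →o Fin (N + 1) :=
  ⟨fun y => ⟨if y.val ≤ v then y.val else y.val + 1, by
      have := y.isLt; split_ifs <;> omega⟩,
    fun x y hxy => by
      simp only [Fin.mk_le_mk]; rw [Fin.le_def] at hxy; split_ifs <;> omega⟩

@[simp] theorem liftF_val {N : ℕ} (v : ℕ) (y : Fin (N - 1 + 1)) :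
    (liftF v y).val = if y.val ≤ v then y.val else y.val + 1 := rfl

theorem colF_surj {N : ℕ} (v : ℕ) (hv : v + 1 ≤ N) : Function.Surjective (colF v hv) := by
  intro y
  refine ⟨liftF v y, ?_⟩
  rw [Fin.ext_iff]
  have := y.isLt
  simp only [colF_val, liftF_val]
  split_ifs <;> omega

/-- The collapsed necklace. -/
def colNeck (T : Necklace) (v : ℕ) (hv : v + 1 ≤ T.N) (h2 : 2 ≤ T.N) : Necklace where
  N := T.N - 1
  pos := by omega
  J := T.J.image (colF v hv)
  zero_mem := Finset.mem_image.2 ⟨0, T.zero_mem, by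
    rw [Fin.ext_iff, colF_val]; simp⟩
  last_mem := Finset.mem_image.2 ⟨Fin.last T.N, T.last_mem, by
    rw [Fin.ext_iff, colF_val]; simp only [Fin.val_last]; split_ifs <;> omega⟩

/-- The collapse as a necklace morphism. -/
def colHom (T : Necklace) (v : ℕ) (hv : v + 1 ≤ T.N) (h2 : 2 ≤ T.N) :
    Hom T (colNeck T v hv h2) where
  f := colF v hv
  map_zero := by
    show colF v hv 0 = (0 : Fin (T.N - 1 + 1))
    rw [Fin.ext_iff, colF_val]; simp
  map_last := by
    show colF v hv (Fin.last T.N) = Fin.last (T.N - 1)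
    rw [Fin.ext_iff, colF_val]
    simp only [Fin.val_last]
    split_ifs <;> omega
  map_bead := map_bead_of_image _ (fun c' hc' => Finset.mem_image.1 hc')

theorem lift_colF {T T' : Necklace} (φ : Hom T T') (v : Fin T.N)
    (hveq : φ.f v.castSucc = φ.f v.succ) (x : Fin (T.N + 1)) :
    φ.f (liftF v.val (colF v.val v.isLt x)) = φ.f x := by
  rcases lt_trichotomy x.val (v.val + 1) with h | h | h
  · congr 1
    rw [Fin.ext_iff]
    simp only [liftF_val, colF_val]
    split_ifs <;> omega
  · have h1 : liftF v.val (colF v.val v.isLt x) = v.castSucc := by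
      rw [Fin.ext_iff]
      simp only [liftF_val, colF_val, Fin.coe_castSucc]
      split_ifs <;> omega
    have h2 : x = v.succ := by rw [Fin.ext_iff]; simpa using h
    rw [h1, h2, hveq]
  · congr 1
    rw [Fin.ext_iff]
    simp only [liftF_val, colF_val]
    split_ifs <;> omega

/-- The quotient morphism through a collapse. -/
def colQuot {T T' : Necklace} (φ : Hom T T') (v : Fin T.N)
    (hveq : φ.f v.castSucc = φ.f v.succ) (h2 : 2 ≤ T.N) :
    Hom (colNeck T v.val v.isLt h2) T' where
  f := ⟨fun y => φ.f (liftF v.val y), fun x y hxy => φ.f.mono ((liftF v.val).mono hxy)⟩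
  map_zero := by
    have h0 : liftF (N := T.N) v.val 0 = 0 := by rw [Fin.ext_iff]; simp
    show φ.f (liftF v.val 0) = 0
    rw [h0, φ.map_zero]
  map_last := by
    show φ.f (liftF v.val (Fin.last (T.N - 1))) = Fin.last T'.N
    by_cases h : v.val = T.N - 1
    · have h1 : liftF (N := T.N) v.val (Fin.last (T.N - 1)) = v.castSucc := by
        rw [Fin.ext_iff]; simp [h]
      have h3 : v.succ = Fin.last T.N := by
        rw [Fin.ext_iff]; simp; omega
      rw [h1, hveq, h3, φ.map_last]
    · have h1 : liftF (N := T.N) v.val (Fin.last (T.N - 1)) = Fin.last T.N := by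
        rw [Fin.ext_iff]
        simp only [liftF_val, Fin.val_last]
        have := v.isLt
        split_ifs <;> omega
      rw [h1, φ.map_last]
  map_bead := map_bead_of_image _ (fun c' hc' => by
    obtain ⟨c, hc, hfc⟩ := joint_mem_image φ c' hc'
    exact ⟨colF v.val v.isLt c, Finset.mem_image.2 ⟨c, hc, rfl⟩, by
      show φ.f (liftF v.val _) = c'
      rw [lift_colF φ v hveq c, hfc]⟩)

end Necklace
namespace Necklace

theorem image_univ_lt_of_not_injective {T T' : Necklace} (φ : Hom T T')
    (hninj : ¬ Function.Injective φ.f) :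
    (Finset.image φ.f Finset.univ).card < T.N + 1 := by
  rcases lt_or_ge (Finset.image φ.f Finset.univ).card (T.N + 1) with h | h
  · exact h
  exfalso
  apply hninj
  have hle : (Finset.image φ.f Finset.univ).card ≤ (Finset.univ : Finset (Fin (T.N + 1))).card :=
    Finset.card_image_le
  rw [Finset.card_univ, Fintype.card_fin] at hle
  have heq : (Finset.image φ.f Finset.univ).card = (Finset.univ : Finset (Fin (T.N + 1))).card := by
    rw [Finset.card_univ, Fintype.card_fin]; omega
  have hinjOn := Finset.injOn_of_card_image_eq heq
  intro x y hxy
  exact hinjOn (Finset.mem_coe.2 (Finset.mem_univ x)) (Finset.mem_coe.2 (Finset.mem_univ y)) hxy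

theorem peel_noninj {T T' : Necklace} (φ : Hom T T') (hninj : ¬ Function.Injective φ.f) :
    ∃ (T₁ : Necklace) (ε : Hom T T₁) (φ₁ : Hom T₁ T'),
      (TypeI ε ∨ TypeII ε ∨ TypeIII ε) ∧ φ = φ₁.comp ε ∧ mu φ₁ < mu φ := by
  -- an adjacent collapsed pair
  have hv : ∃ v : Fin T.N, φ.f v.castSucc = φ.f v.succ := by
    by_contra h
    push_neg at h
    apply hninj
    have : StrictMono φ.f := by
      rw [Fin.strictMono_iff_lt_succ]
      intro i
      exact lt_of_le_of_ne (φ.f.mono (by rw [Fin.le_def]; simp)) (h i)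
    exact this.injective
  obtain ⟨v, hveq⟩ := hv
  obtain ⟨a, b, hbead, ha, hb⟩ := exists_bead_cover T v.castSucc v.succ
    (by rw [Fin.le_def]; simp)
    (fun c _ => by rw [Fin.le_def, Fin.le_def]; simp; omega)
  have ha' : (a : ℕ) ≤ (v : ℕ) := by rw [Fin.le_def] at ha; simpa using ha
  have hb' : (v : ℕ) + 1 ≤ (b : ℕ) := by rw [Fin.le_def] at hb; simpa using hb
  have hvlt : (v : ℕ) < T.N := v.isLt
  have hblt : (b : ℕ) < T.N + 1 := b.isLt
  have hN2 : 2 ≤ T.N := by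
    by_contra hc
    have hT1 : T.N = 1 := by have := T.pos; omega
    have hv0 : (v : ℕ) = 0 := by omega
    have h0 : v.castSucc = (0 : Fin (T.N + 1)) := by
      rw [Fin.ext_iff]; simpa using hv0
    have h1 : v.succ = Fin.last T.N := by
      rw [Fin.ext_iff]; simp [hv0, hT1]
    rw [h0, h1, φ.map_zero, φ.map_last] at hveq
    have := T'.pos
    rw [Fin.ext_iff] at hveq
    simp at hveq
    omega
  refine ⟨colNeck T v.val v.isLt hN2, colHom T v.val v.isLt hN2, colQuot φ v hveq hN2, ?_, ?_, ?_⟩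
  · -- elementary
    by_cases hba : 2 ≤ (b : ℕ) - (a : ℕ)
    · -- Type II
      refine Or.inr (Or.inl ⟨?_, colF_surj v.val v.isLt, rfl, v, ⟨?_, a, b, hbead, ha, hb, hba⟩, ?_⟩)
      · -- beads equal
        show T.J.card - 1 = (T.J.image (colF v.val v.isLt)).card - 1
        rw [Finset.card_image_of_injOn]
        intro c hc c' hc' heq
        rw [Finset.mem_coe] at hc hc'
        rw [Fin.ext_iff] at heq ⊢
        simp only [colF_val] at heq
        rcases hbead.2.2.2 c hc with h1 | h1 <;> rcases hbead.2.2.2 c' hc' with h2 | h2 <;>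
          rw [Fin.le_def] at h1 h2 <;> split_ifs at heq <;> omega
      · -- collapses the pair
        show colF v.val v.isLt v.castSucc = colF v.val v.isLt v.succ
        rw [Fin.ext_iff]
        simp only [colF_val, Fin.coe_castSucc, Fin.val_succ]
        split_ifs <;> omega
      · -- uniqueness
        intro w hw
        have hw' : (colF v.val v.isLt w.castSucc).val = (colF v.val v.isLt w.succ).val :=
          congrArg Fin.val hw
        simp only [colF_val, Fin.coe_castSucc, Fin.val_succ] at hw'
        rw [Fin.ext_iff]
        split_ifs at hw' <;> omega
    · -- Type III
      have hav : (a : ℕ) = (v : ℕ) ∧ (b : ℕ) = (v : ℕ) + 1 := by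
        have := hbead.2.2.1
        rw [Fin.lt_def] at this
        omega
      have h3 : 3 ≤ T.J.card := by
        by_contra hc
        push_neg at hc
        have h0l : (0 : Fin (T.N + 1)) ≠ Fin.last T.N := by
          rw [Ne, Fin.ext_iff]; simp; omega
        have hsub : ({0, Fin.last T.N} : Finset (Fin (T.N + 1))) ⊆ T.J := by
          intro z hz
          simp only [Finset.mem_insert, Finset.mem_singleton] at hz
          rcases hz with rfl | rfl
          · exact T.zero_mem
          · exact T.last_mem
        have hc2 : ({0, Fin.last T.N} : Finset (Fin (T.N + 1))).card = 2 := by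
          rw [Finset.card_insert_of_notMem (by simpa using h0l), Finset.card_singleton]
        have hJeq := Finset.eq_of_subset_of_card_le hsub (by omega)
        have haz : a ∈ ({0, Fin.last T.N} : Finset (Fin (T.N + 1))) := hJeq ▸ hbead.1
        have hbz : b ∈ ({0, Fin.last T.N} : Finset (Fin (T.N + 1))) := hJeq ▸ hbead.2.1
        simp only [Finset.mem_insert, Finset.mem_singleton, Fin.ext_iff, Fin.val_last] at haz hbz
        simp only [Fin.val_zero] at haz hbz
        omega
      have hae : a = v.castSucc := by rw [Fin.ext_iff]; simpa using hav.1
      have hbe : b = v.succ := by rw [Fin.ext_iff]; simpa using hav.2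
      rw [hae, hbe] at hbead
      refine Or.inr (Or.inr ⟨?_, colF_surj v.val v.isLt, rfl, v.castSucc, v.succ, hbead, ?_⟩)
      · show 2 ≤ T.J.card - 1
        omega
      · intro x y
        show colF v.val v.isLt x = colF v.val v.isLt y ↔
          x = y ∨ ((v.castSucc ≤ x ∧ x ≤ v.succ) ∧ (v.castSucc ≤ y ∧ y ≤ v.succ))
        simp only [Fin.ext_iff, Fin.le_def, Fin.coe_castSucc, Fin.val_succ, colF_val]
        constructor
        · intro h
          split_ifs at h <;> omega
        · intro h
          split_ifs <;> omega
  · exact Hom.ext' (fun x => (lift_colF φ v hveq x).symm)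
  · -- measure decreases
    have hr : Finset.image (colQuot φ v hveq hN2).f Finset.univ = Finset.image φ.f Finset.univ := by
      apply Finset.Subset.antisymm
      · intro z hz
        obtain ⟨y, _, rfl⟩ := Finset.mem_image.1 hz
        exact Finset.mem_image.2 ⟨liftF v.val y, Finset.mem_univ _, rfl⟩
      · intro z hz
        obtain ⟨x, _, rfl⟩ := Finset.mem_image.1 hz
        exact Finset.mem_image.2 ⟨colF v.val v.isLt x, Finset.mem_univ _, lift_colF φ v hveq x⟩
    have hjc : (colNeck T v.val v.isLt hN2).J.image (colQuot φ v hveq hN2).f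
        = T.J.image φ.f := by
      show (T.J.image (colF v.val v.isLt)).image (colQuot φ v hveq hN2).f = T.J.image φ.f
      refine Finset.image_image.trans ?_
      exact Finset.image_congr (fun x _ => lift_colF φ v hveq x)
    have hrlt := image_univ_lt_of_not_injective φ hninj
    have hNeq : (colNeck T v.val v.isLt hN2).N = T.N - 1 := rfl
    unfold mu
    rw [hr, hjc, hNeq]
    omega

end Necklace
namespace Necklace

/-- The vertex map inserting a new vertex after `u`. -/
def insF {N : ℕ} (u : ℕ) : Fin (N + 1) →o Fin (N + 1 + 1) :=
  ⟨fun x => ⟨if x.val ≤ u then x.val else x.val + 1, by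
      have := x.isLt; split_ifs <;> omega⟩,
    fun x y hxy => by
      simp only [Fin.mk_le_mk]; rw [Fin.le_def] at hxy; split_ifs <;> omega⟩

@[simp] theorem insF_val {N : ℕ} (u : ℕ) (x : Fin (N + 1)) :
    (insF u x).val = if x.val ≤ u then x.val else x.val + 1 := rfl

theorem insF_inj {N : ℕ} (u : ℕ) : Function.Injective (insF (N := N) u) := by
  intro x y h
  rw [Fin.ext_iff] at h ⊢
  simp only [insF_val] at h
  split_ifs at h <;> omega

/-- The necklace with an extra vertex inserted after `u` inside a bead. -/
def insNeck (T : Necklace) (u : ℕ) (hu : u < T.N) : Necklace where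
  N := T.N + 1
  pos := by omega
  J := T.J.image (insF u)
  zero_mem := Finset.mem_image.2 ⟨0, T.zero_mem, by
    rw [Fin.ext_iff, insF_val]; simp⟩
  last_mem := Finset.mem_image.2 ⟨Fin.last T.N, T.last_mem, by
    rw [Fin.ext_iff, insF_val]; simp only [Fin.val_last]; split_ifs <;> omega⟩

/-- The insertion as a necklace morphism. -/
def insHom (T : Necklace) (u : ℕ) (hu : u < T.N) : Hom T (insNeck T u hu) where
  f := insF u
  map_zero := by
    show insF u 0 = (0 : Fin (T.N + 1 + 1))
    rw [Fin.ext_iff, insF_val]; simp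
  map_last := by
    show insF u (Fin.last T.N) = Fin.last (T.N + 1)
    rw [Fin.ext_iff, insF_val]
    simp only [Fin.val_last]
    split_ifs <;> omega
  map_bead := map_bead_of_image _ (fun c' hc' => Finset.mem_image.1 hc')

section insQuot

variable {T T' : Necklace} (φ : Hom T T') (u : Fin (T.N + 1)) (hu : u.val < T.N)
  (usucc : Fin (T.N + 1)) (husucc : usucc.val = u.val + 1)
  (w : Fin (T'.N + 1)) (hlt : (φ.f u).val < w.val) (hgt : w.val < (φ.f usucc).val)

/-- The vertex map of the quotient morphism through an insertion. -/
def insQuotF : Fin (T.N + 1 + 1) →o Fin (T'.N + 1) :=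
  ⟨fun y => if y.val = u.val + 1 then w else φ.f (colF u.val (by omega) y),
    by
      have hm : ∀ p q : Fin (T.N + 1), p.val ≤ q.val → (φ.f p).val ≤ (φ.f q).val :=
        fun p q h => Fin.le_def.1 (φ.f.mono (Fin.le_def.2 h))
      intro x y hxy
      rw [Fin.le_def] at hxy
      rw [Fin.le_def]
      dsimp only
      split_ifs with h1 h2 h2
      · omega
      · -- x at the new vertex, y after it
        have h3 := hm usucc (colF u.val (by omega) y) (by
          simp only [colF_val]; split_ifs <;> omega)
        have h4 := Fin.lt_def.1 hgt
        omega
      · -- x before, y at the new vertex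
        have h3 := hm (colF u.val (by omega) x) u (by
          simp only [colF_val]; split_ifs <;> omega)
        omega
      · exact hm _ _ (by simp only [colF_val]; split_ifs <;> omega)⟩

theorem insQuotF_apply (y : Fin (T.N + 1 + 1)) :
    insQuotF φ u hu usucc husucc w hlt hgt y
      = if y.val = u.val + 1 then w else φ.f (colF u.val (by omega) y) := rfl

theorem insQuotF_comp (x : Fin (T.N + 1)) :
    insQuotF φ u hu usucc husucc w hlt hgt (insF u.val x) = φ.f x := by
  rw [insQuotF_apply]
  have hx := x.isLt
  rcases le_or_gt x.val u.val with h | h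
  · rw [if_neg (by simp only [insF_val]; split_ifs <;> omega)]
    congr 1
    rw [Fin.ext_iff]
    simp only [colF_val, insF_val]
    split_ifs <;> omega
  · rw [if_neg (by simp only [insF_val]; split_ifs <;> omega)]
    congr 1
    rw [Fin.ext_iff]
    simp only [colF_val, insF_val]
    split_ifs <;> omega

/-- The quotient morphism through an insertion. -/
def insQuot : Hom (insNeck T u.val hu) T' where
  f := insQuotF φ u hu usucc husucc w hlt hgt
  map_zero := by
    show insQuotF φ u hu usucc husucc w hlt hgt (0 : Fin (T.N + 1 + 1)) = (0 : Fin (T'.N + 1))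
    rw [insQuotF_apply, if_neg (by simp)]
    have h0 : colF (N := T.N + 1) u.val (by omega) 0 = 0 := by
      rw [Fin.ext_iff, colF_val]; simp
    rw [h0, φ.map_zero]
  map_last := by
    show insQuotF φ u hu usucc husucc w hlt hgt (Fin.last (T.N + 1)) = Fin.last T'.N
    rw [insQuotF_apply, if_neg (by simp only [Fin.val_last]; omega)]
    have h0 : colF (N := T.N + 1) u.val (by omega) (Fin.last (T.N + 1)) = Fin.last T.N := by
      rw [Fin.ext_iff, colF_val]
      simp only [Fin.val_last]
      split_ifs <;> omega
    rw [h0, φ.map_last]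
  map_bead := map_bead_of_image _ (fun c' hc' => by
    obtain ⟨c, hc, hfc⟩ := joint_mem_image φ c' hc'
    exact ⟨insF u.val c, Finset.mem_image.2 ⟨c, hc, rfl⟩,
      (insQuotF_comp φ u hu usucc husucc w hlt hgt c).trans hfc⟩)

theorem insQuotF_inj (hinj : Function.Injective φ.f)
    (hw : ∀ x, φ.f x ≠ w) : Function.Injective (insQuotF φ u hu usucc husucc w hlt hgt) := by
  have hcinj : ∀ x y : Fin (T.N + 1 + 1), x.val ≠ u.val + 1 → y.val ≠ u.val + 1 →
      colF (N := T.N + 1) u.val (by omega) x = colF (N := T.N + 1) u.val (by omega) y →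
      x = y := by
    intro x y hx hy h
    rw [Fin.ext_iff] at h ⊢
    simp only [colF_val] at h
    split_ifs at h <;> omega
  intro x y h
  rw [insQuotF_apply, insQuotF_apply] at h
  split_ifs at h with h1 h2 h2
  · rw [Fin.ext_iff]; omega
  · exact absurd h.symm (hw _)
  · exact absurd h (hw _)
  · exact hcinj x y h1 h2 (hinj h)

end insQuot

end Necklace
namespace Necklace

theorem peel_nonsurj {T T' : Necklace} (φ : Hom T T') (hinj : Function.Injective φ.f)
    (hnsurj : ¬ Function.Surjective φ.f) :
    ∃ (T₁ : Necklace) (ε : Hom T T₁) (φ₁ : Hom T₁ T'),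
      (TypeI ε ∨ TypeII ε ∨ TypeIII ε) ∧ φ = φ₁.comp ε ∧ mu φ₁ < mu φ := by
  rw [Function.Surjective] at hnsurj
  push_neg at hnsurj
  obtain ⟨w, hw⟩ := hnsurj
  have hw0 : 0 < w.val := by
    rcases Nat.eq_zero_or_pos w.val with h | h
    · exfalso
      exact hw 0 (by rw [φ.map_zero, Fin.ext_iff]; simp [h])
    · exact h
  have hwl : w.val < T'.N := by
    have h := w.isLt
    rcases lt_or_ge w.val T'.N with h' | h'
    · exact h'
    · exfalso
      exact hw (Fin.last T.N) (by rw [φ.map_last, Fin.ext_iff]; simp; omega)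
  -- the largest vertex mapping below w
  have hS : (Finset.univ.filter (fun x : Fin (T.N + 1) => (φ.f x).val < w.val)).Nonempty :=
    ⟨0, Finset.mem_filter.2 ⟨Finset.mem_univ _, by rw [φ.map_zero]; simpa using hw0⟩⟩
  have key : ∃ u : Fin (T.N + 1), (φ.f u).val < w.val ∧
      ∀ x : Fin (T.N + 1), (φ.f x).val < w.val → x ≤ u := by
    refine ⟨(Finset.univ.filter (fun x : Fin (T.N + 1) => (φ.f x).val < w.val)).max' hS, ?_, ?_⟩
    · exact (Finset.mem_filter.1 (Finset.max'_mem _ hS)).2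
    · intro x hx
      exact Finset.le_max' _ x (Finset.mem_filter.2 ⟨Finset.mem_univ _, hx⟩)
  obtain ⟨u, hum, humax⟩ := key
  have hu : u.val < T.N := by
    rcases lt_or_ge u.val T.N with h | h
    · exact h
    · exfalso
      have hue : u = Fin.last T.N := by rw [Fin.ext_iff]; have := u.isLt; simp; omega
      rw [hue, φ.map_last] at hum
      simp at hum
      omega
  obtain ⟨us, hus⟩ : ∃ us : Fin (T.N + 1), us.val = u.val + 1 := ⟨⟨u.val + 1, by omega⟩, rfl⟩
  have hgt : w.val < (φ.f us).val := by
    have h1 : ¬ (φ.f us).val < w.val := by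
      intro hcon
      have := humax _ hcon
      rw [Fin.le_def] at this
      omega
    have h2 : (φ.f us).val ≠ w.val := fun hcon => hw us (Fin.ext hcon)
    omega
  refine ⟨insNeck T u.val hu, insHom T u.val hu,
    insQuot φ u hu us hus w hum hgt, Or.inl ⟨?_, ?_⟩, ?_, ?_⟩
  · -- injective
    exact insF_inj u.val
  · -- dimension raises by one
    show (insNeck T u.val hu).N + 1 - (insNeck T u.val hu).J.card = T.N + 1 - T.J.card + 1
    have h1 : (insNeck T u.val hu).J.card = T.J.card := by
      show (T.J.image (insF u.val)).card = T.J.card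
      exact Finset.card_image_of_injective _ (insF_inj u.val)
    have h2 := card_J_le T
    have h3 : 2 ≤ T.J.card := by
      have := Finset.one_lt_card.2 ⟨0, T.zero_mem, Fin.last T.N, T.last_mem, by
        rw [Ne, Fin.ext_iff]; simp; have := T.pos; omega⟩
      omega
    rw [h1]
    show T.N + 1 + 1 - T.J.card = T.N + 1 - T.J.card + 1
    omega
  · exact Hom.ext' (fun x => (insQuotF_comp φ u hu us hus w hum hgt x).symm)
  · -- measure decreases
    have hNlt : T.N < T'.N := by
      have h1 : T.N + 1 ≤ T'.N + 1 := by
        have := Fintype.card_le_of_injective φ.f hinj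
        simpa using this
      rcases lt_or_eq_of_le h1 with h | h
      · omega
      · exfalso
        have hc : (Finset.image φ.f Finset.univ).card = Fintype.card (Fin (T'.N + 1)) := by
          rw [Finset.card_image_of_injective _ hinj, Finset.card_univ]
          simp [← h]
        have huniv := Finset.eq_univ_of_card _ hc
        have hww : w ∈ Finset.image φ.f Finset.univ := huniv ▸ Finset.mem_univ w
        obtain ⟨x, _, hx⟩ := Finset.mem_image.1 hww
        exact hw x hx
    have hr : (Finset.image φ.f Finset.univ).card = T.N + 1 := by
      rw [Finset.card_image_of_injective _ hinj, Finset.card_univ]; simp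
    have hr1 : (Finset.image (insQuot φ u hu us hus w hum hgt).f Finset.univ).card
        = T.N + 1 + 1 := by
      show (Finset.image (insQuotF φ u hu us hus w hum hgt) Finset.univ).card = T.N + 1 + 1
      rw [Finset.card_image_of_injective _ (insQuotF_inj φ u hu us hus w hum hgt hinj hw),
        Finset.card_univ]
      show Fintype.card (Fin (T.N + 1 + 1)) = T.N + 1 + 1
      simp
    have hjc : (insNeck T u.val hu).J.image (insQuot φ u hu us hus w hum hgt).f
        = T.J.image φ.f := by
      show (T.J.image (insF u.val)).image _ = T.J.image φ.f
      refine Finset.image_image.trans ?_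
      exact Finset.image_congr (fun x _ => insQuotF_comp φ u hu us hus w hum hgt x)
    unfold mu
    rw [hr, hr1, hjc]
    have hNeq : (insNeck T u.val hu).N = T.N + 1 := rfl
    rw [hNeq]
    omega

end Necklace
namespace Necklace

theorem peel_joints {T T' : Necklace} (φ : Hom T T') (hinj : Function.Injective φ.f)
    (hsurj : Function.Surjective φ.f)
    (hnid : ¬ ∃ h : T = T', HEq φ (Hom.id T)) :
    ∃ (T₁ : Necklace) (ε : Hom T T₁) (φ₁ : Hom T₁ T'),
      (TypeI ε ∨ TypeII ε ∨ TypeIII ε) ∧ φ = φ₁.comp ε ∧ mu φ₁ < mu φ := by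
  obtain ⟨n, pos, J, hz, hl⟩ := T
  obtain ⟨n', pos', J', h0', hl'⟩ := T'
  have hN : n = n' := by
    have := Fintype.card_of_bijective ⟨hinj, hsurj⟩
    simp at this
    omega
  subst hN
  have hid : ∀ x, φ.f x = x := by
    have hsm : StrictMono φ.f := φ.f.mono.strictMono_of_injective hinj
    intro x
    have he := Subsingleton.elim (hsm.orderIsoOfSurjective φ.f hsurj) (OrderIso.refl _)
    have h2 : (hsm.orderIsoOfSurjective φ.f hsurj) x = x := by rw [he]; rfl
    rwa [StrictMono.coe_orderIsoOfSurjective] at h2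
  by_cases hJJ : J' = J
  · exfalso
    apply hnid
    subst hJJ
    exact ⟨rfl, heq_of_eq (Hom.ext' (fun x => hid x))⟩
  · have hsubJ : J' ⊆ J := by
      intro c' hc'
      obtain ⟨c, hc, hfc⟩ := joint_mem_image φ c' hc'
      rw [hid c] at hfc
      exact hfc ▸ hc
    obtain ⟨j, hjJ, hjJ'⟩ := Finset.exists_of_ssubset (hsubJ.ssubset_of_ne hJJ)
    have hsub2 : J' ⊆ J.erase j := by
      intro c' hc'
      refine Finset.mem_erase.2 ⟨?_, hsubJ hc'⟩
      intro h
      rw [h] at hc'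
      exact hjJ' hc'
    have hJcard : J.card ≤ n + 1 := by
      have := Finset.card_le_univ J
      simpa using this
    refine ⟨⟨n, pos, J.erase j, ?_, ?_⟩, ⟨OrderHom.id, rfl, rfl, ?_⟩,
      ⟨φ.f, φ.map_zero, φ.map_last, ?_⟩,
      Or.inl ⟨fun a b h => h, ?_⟩, Hom.ext' (fun x => rfl), ?_⟩
    · refine Finset.mem_erase.2 ⟨?_, hz⟩
      intro h
      rw [← h] at hjJ'
      exact hjJ' h0'
    · refine Finset.mem_erase.2 ⟨?_, hl⟩
      intro h
      rw [← h] at hjJ'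
      exact hjJ' hl'
    · apply map_bead_of_image
      intro c' hc'
      exact ⟨c', Finset.mem_of_mem_erase hc', rfl⟩
    · apply map_bead_of_image
      intro c' hc'
      exact ⟨c', hsub2 hc', hid c'⟩
    · -- dimension
      show n + 1 - (J.erase j).card = n + 1 - J.card + 1
      rw [Finset.card_erase_of_mem hjJ]
      have h2l : 2 ≤ J.card := by
        have := Finset.one_lt_card.2 ⟨0, hz, Fin.last n, hl, by
          rw [Ne, Fin.ext_iff]; simp; omega⟩
        omega
      omega
    · -- measure
      have h1 : ∀ s : Finset (Fin (n + 1)), s.image φ.f = s := fun s => by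
        rw [Finset.image_congr (fun x _ => hid x), Finset.image_id']
      have hcle : J'.card ≤ (J.erase j).card := Finset.card_le_card hsub2
      have hec := Finset.card_erase_of_mem hjJ
      have hpos : 0 < J.card := Finset.card_pos.2 ⟨j, hjJ⟩
      unfold mu
      show (n + 1 - (Finset.image φ.f Finset.univ).card)
          + (n + 1 - (Finset.image φ.f Finset.univ).card)
          + (((J.erase j).image φ.f).card - J'.card)
        < (n + 1 - (Finset.image φ.f Finset.univ).card)
          + (n + 1 - (Finset.image φ.f Finset.univ).card)
          + ((J.image φ.f).card - J'.card)
      simp only [h1]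
      omega

end Necklace
namespace Necklace

theorem main_induction : ∀ (n : ℕ) {T T' : Necklace} (φ : Hom T T'), mu φ ≤ n →
    (∃ h : T = T', HEq φ (Hom.id T)) ∨
      IsCompositeOf (fun _ _ g => TypeI g ∨ TypeII g ∨ TypeIII g) φ := by
  intro n
  induction n using Nat.strong_induction_on with
  | _ n ih =>
    intro T T' φ hn
    by_cases hid : ∃ h : T = T', HEq φ (Hom.id T)
    · exact Or.inl hid
    refine Or.inr ?_
    have hpeel : ∃ (T₁ : Necklace) (ε : Hom T T₁) (φ₁ : Hom T₁ T'),
        (TypeI ε ∨ TypeII ε ∨ TypeIII ε) ∧ φ = φ₁.comp ε ∧ mu φ₁ < mu φ := by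
      by_cases hinj : Function.Injective φ.f
      · by_cases hsurj : Function.Surjective φ.f
        · exact peel_joints φ hinj hsurj hid
        · exact peel_nonsurj φ hinj hsurj
      · exact peel_noninj φ hinj
    obtain ⟨T₁, ε, φ₁, hP, hcomp, hμ⟩ := hpeel
    have hlt : mu φ₁ < n ∨ mu φ₁ ≤ n := by omega
    rcases ih (mu φ₁) (by omega) φ₁ le_rfl with hid1 | hcomp1
    · obtain ⟨h, hh⟩ := hid1
      subst h
      have hφ1 : φ₁ = Hom.id T₁ := eq_of_heq hh
      subst hφ1
      have : (Hom.id T₁).comp ε = ε := Hom.ext' (fun x => rfl)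
      rw [hcomp, this]
      exact IsCompositeOf.of ε hP
    · rw [hcomp]
      exact IsCompositeOf.comp ε φ₁ hP hcomp1

end Necklace

open Necklace in
/-- **Proposition 1.**  Every non-identity morphism in the category `Nec` of necklaces is a
composite of morphisms of type (i) (injective, raising dimension by one), type (ii)
(a codegeneracy on exactly one bead of dimension `≥ 2`, identity on the other beads) and
type (iii) (collapsing one bead to a vertex, injectively on the other beads). -/
theorem nonidentity_necklace_morphism_is_composite_of_elementary
    (T T' : Necklace) (φ : Hom T T')
    (hφ : ¬ ∃ h : T = T', HEq φ (Hom.id T)) :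
    IsCompositeOf (fun _ _ g => TypeI g ∨ TypeII g ∨ TypeIII g) φ := by
  rcases Necklace.main_induction (Necklace.mu φ) φ le_rfl with h | h
  · exact absurd h hφ
  · exact h
end

section
/- Every injective necklace morphism f: T = Δ^{n_1} ∨ ⋯ ∨ Δ^{n_k} → T' = Δ^{m_1} ∨ ⋯ ∨ Δ^{m_l} with dim(T') − dim(T) = 1 is of exactly one of two kinds: (ia) T has one fewer vertex than T' (forcing k = l) and f = id ∨ d^j ∨ id where d^j: Δ^{n_i} → Δ^{m_i} is the simplicial j-th coface morphism for some i with n_i + 1 = m_i and some j ∈ {1,…,n_i − 1}; or (ib) T and T' have the same number of vertices (forcing l = k + 1) and f = id ∨ W^j ∨ id where W^j: Δ^{n_i} ∨ Δ^{n_{i+1}} → Δ^{m_i} with n_i + n_{i+1} = m_i is the injective map whose image in Δ^{m_i} is the wedge of the two subsimplicial sets corresponding to the j-th term of the Alexander–Whitney diagonal of the top simplex of Δ^{m_i}. Moreover, for every necklace T of dimension n there are exactly n morphisms of type (ia) with target T and exactly n morphisms of type (ib) with target T. -/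
namespace Necklace

/-- Type (ia): `f = id ∨ d^j ∨ id`, where `d^j : Δ^{n_i} → Δ^{m_i}` (`m_i = n_i + 1`) is an
inner coface morphism of one bead: equivalently, `f` is the monotone injection skipping
exactly one vertex `u` of the target which is interior to its bead (not a joint), and it
identifies the joints of the source with the joints of the target.  Such a morphism is
injective, has one fewer vertex in the source than in the target, the same number of beads,
and raises dimension by one. -/
def TypeIa {T T' : Necklace} (φ : Hom T T') : Prop :=
  Function.Injective φ.f ∧
  T'.dim = T.dim + 1 ∧
  T'.N = T.N + 1 ∧
  T'.J = T.J.image φ.f ∧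
  ∃ u : Fin (T'.N + 1), u ∉ T'.J ∧
    ∀ v : Fin (T.N + 1),
      (φ.f v : ℕ) = if (v : ℕ) < (u : ℕ) then (v : ℕ) else (v : ℕ) + 1

/-- Type (ib): `f = id ∨ W^j ∨ id`, where
`W^j : Δ^{n_i} ∨ Δ^{n_{i+1}} → Δ^{m_i}` (`n_i + n_{i+1} = m_i`) is the injective morphism
whose image is the wedge of the two subsimplicial sets appearing in the `j`-th term of the
Alexander–Whitney diagonal of the top simplex of `Δ^{m_i}`: equivalently, `f` is the
identity on vertices and the source has exactly one extra joint `u` (interior to a bead of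
the target).  Such a morphism is injective, source and target have the same number of
vertices, the target has one bead less, and the dimension is raised by one. -/
def TypeIb {T T' : Necklace} (φ : Hom T T') : Prop :=
  Function.Injective φ.f ∧
  T'.dim = T.dim + 1 ∧
  T'.N = T.N ∧
  (∀ v : Fin (T.N + 1), (φ.f v : ℕ) = (v : ℕ)) ∧
  ∃ u : Fin (T'.N + 1), u ∉ T'.J ∧
    T.J.image Fin.val = insert (u : ℕ) (T'.J.image Fin.val)

end Necklace

namespace Necklace

lemma val_le_apply {N M : ℕ} {f : Fin (N + 1) → Fin (M + 1)} (hsm : StrictMono f) :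
    ∀ v, v.val ≤ (f v).val := by
  have key : ∀ k, ∀ v : Fin (N + 1), v.val = k → k ≤ (f v).val := by
    intro k
    induction k with
    | zero => intro v _; omega
    | succ k ih =>
      intro v hv
      have hlt : (⟨k, by omega⟩ : Fin (N + 1)) < v := by rw [Fin.lt_def]; simp only; omega
      have h1 := ih ⟨k, by omega⟩ rfl
      have h2 := hsm hlt
      rw [Fin.lt_def] at h2
      omega
  intro v; exact key v.val v rfl

lemma apply_le_val {N M : ℕ} {f : Fin (N + 1) → Fin (M + 1)} (hsm : StrictMono f)
    (hl : (f (Fin.last N)).val = M) : ∀ v, (f v).val ≤ v.val + (M - N) := by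
  have hNM : N ≤ M := by
    have h1 := val_le_apply hsm (Fin.last N)
    have h2 := (f (Fin.last N)).isLt
    simp only [Fin.val_last] at h1
    omega
  have key : ∀ k, ∀ v : Fin (N + 1), N - v.val = k → (f v).val ≤ v.val + (M - N) := by
    intro k
    induction k with
    | zero =>
      intro v hv
      have hvN : v.val ≤ N := by omega
      have hvl : v = Fin.last N := Fin.ext (by simp only [Fin.val_last]; omega)
      rw [hvl, hl]
      simp only [Fin.val_last]
      omega
    | succ k ih =>
      intro v hv
      have hvN : v.val < N := by omega
      have hlt : v < (⟨v.val + 1, by omega⟩ : Fin (N + 1)) := by rw [Fin.lt_def]; simp only; omega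
      have h1 := ih ⟨v.val + 1, by omega⟩ (by simp only; omega)
      have h2 := hsm hlt
      rw [Fin.lt_def] at h2
      simp only at h1
      omega
  intro v; exact key (N - v.val) v rfl

lemma exists_skip {N M : ℕ} (hM : M = N + 1) {f : Fin (N + 1) → Fin (M + 1)}
    (hsm : StrictMono f) (hl : (f (Fin.last N)).val = M) :
    ∃ t ≤ N, ∀ v, (f v).val = if v.val < t then v.val else v.val + 1 := by
  have hA := val_le_apply hsm
  have hB : ∀ v, (f v).val ≤ v.val + 1 := by
    intro v; have := apply_le_val hsm hl v; omega
  classical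
  have hne : (Finset.univ.filter (fun v : Fin (N + 1) => v.val + 1 ≤ (f v).val)).Nonempty := by
    refine ⟨Fin.last N, Finset.mem_filter.mpr ⟨Finset.mem_univ _, ?_⟩⟩
    rw [hl]; simp only [Fin.val_last]; omega
  set t := (Finset.univ.filter (fun v : Fin (N + 1) => v.val + 1 ≤ (f v).val)).min' hne with ht
  have htval : t.val + 1 ≤ (f t).val :=
    (Finset.mem_filter.mp (Finset.min'_mem _ hne)).2
  have hmin : ∀ v : Fin (N + 1), v.val + 1 ≤ (f v).val → t.val ≤ v.val := by
    intro v hv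
    have hvmem : v ∈ Finset.univ.filter (fun v : Fin (N + 1) => v.val + 1 ≤ (f v).val) :=
      Finset.mem_filter.mpr ⟨Finset.mem_univ _, hv⟩
    have := Finset.min'_le _ v hvmem
    rw [← ht, Fin.le_def] at this
    exact this
  refine ⟨t.val, by omega, ?_⟩
  have hup : ∀ k (v : Fin (N + 1)), v.val = t.val + k → (f v).val = v.val + 1 := by
    intro k
    induction k with
    | zero =>
      intro v hv
      have hv' : v = t := Fin.val_injective (by omega)
      rw [hv']
      have := hB t
      omega
    | succ k ih =>
      intro v hv
      have hfw := ih ⟨v.val - 1, by omega⟩ (by simp only; omega)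
      have hlt : (⟨v.val - 1, by omega⟩ : Fin (N + 1)) < v := by
        rw [Fin.lt_def]; simp only; omega
      have h2 := hsm hlt
      rw [Fin.lt_def] at h2
      have := hB v
      simp only at hfw
      omega
  intro v
  by_cases hvt : v.val < t.val
  · rw [if_pos hvt]
    have h1 : ¬ (v.val + 1 ≤ (f v).val) := fun h => by have := hmin v h; omega
    have := hA v
    omega
  · rw [if_neg hvt]
    exact hup (v.val - t.val) v (by omega)

lemma eq_id_val {N M : ℕ} (hM : M = N) {f : Fin (N + 1) → Fin (M + 1)}
    (hsm : StrictMono f) (hl : (f (Fin.last N)).val = M) : ∀ v, (f v).val = v.val := by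
  intro v
  have h1 := val_le_apply hsm v
  have h2 := apply_le_val hsm hl v
  omega

end Necklace
namespace Necklace

lemma exists_bead_between (T : Necklace) (v w : Fin (T.N + 1)) (hvw : v < w)
    (hno : ∀ c ∈ T.J, c ≤ v ∨ w ≤ c) :
    ∃ a b, T.IsBead a b ∧ a ≤ v ∧ w ≤ b := by
  classical
  have hA : (T.J.filter (fun x => x ≤ v)).Nonempty :=
    ⟨0, Finset.mem_filter.mpr ⟨T.zero_mem, Fin.zero_le v⟩⟩
  have hB : (T.J.filter (fun x => w ≤ x)).Nonempty :=
    ⟨Fin.last _, Finset.mem_filter.mpr ⟨T.last_mem, Fin.le_last w⟩⟩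
  set a := (T.J.filter (fun x => x ≤ v)).max' hA with ha
  set b := (T.J.filter (fun x => w ≤ x)).min' hB with hb
  have haf := Finset.mem_filter.mp (Finset.max'_mem _ hA)
  have hbf := Finset.mem_filter.mp (Finset.min'_mem _ hB)
  refine ⟨a, b, ⟨haf.1, hbf.1, lt_of_le_of_lt haf.2 (lt_of_lt_of_le hvw hbf.2), ?_⟩,
    haf.2, hbf.2⟩
  intro c hc
  rcases hno c hc with h | h
  · refine Or.inl ?_
    have hcmem : c ∈ T.J.filter (fun x => x ≤ v) := Finset.mem_filter.mpr ⟨hc, h⟩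
    exact Finset.le_max' _ c hcmem
  · refine Or.inr ?_
    have hcmem : c ∈ T.J.filter (fun x => w ≤ x) := Finset.mem_filter.mpr ⟨hc, h⟩
    exact Finset.min'_le _ c hcmem

lemma joint_mem_range {T T' : Necklace} (φ : Hom T T') {c : Fin (T'.N + 1)} (hc : c ∈ T'.J) :
    ∃ v, φ.f v = c := by
  classical
  by_contra h
  push_neg at h
  have hc0 : 0 < c.val := by
    rcases Nat.eq_zero_or_pos c.val with h0 | h0
    · have hceq : (0 : Fin (T'.N + 1)) = c := Fin.ext (by simp only [Fin.val_zero]; omega)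
      exact absurd (φ.map_zero.trans hceq) (h 0)
    · exact h0
  have hcl : c.val < T'.N := by
    rcases Nat.lt_or_ge c.val T'.N with h0 | h0
    · exact h0
    · have hcval : c = Fin.last T'.N := Fin.ext (by have := c.isLt; simp only [Fin.val_last]; omega)
      exact absurd (φ.map_last.trans hcval.symm) (h _)
  set S := Finset.univ.filter (fun v : Fin (T.N + 1) => (φ.f v).val < c.val) with hS
  have h0S : (0 : Fin (T.N + 1)) ∈ S := by
    refine Finset.mem_filter.mpr ⟨Finset.mem_univ _, ?_⟩
    rw [φ.map_zero]
    exact hc0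
  have hne : S.Nonempty := ⟨0, h0S⟩
  set v := S.max' hne with hv
  have hvlt : (φ.f v).val < c.val := (Finset.mem_filter.mp (Finset.max'_mem _ hne)).2
  have hvN : v.val < T.N := by
    by_contra h'
    have hvl : v = Fin.last T.N := Fin.ext (by have := v.isLt; simp only [Fin.val_last]; omega)
    rw [hvl, φ.map_last] at hvlt
    simp only [Fin.val_last] at hvlt
    omega
  set w : Fin (T.N + 1) := ⟨v.val + 1, by omega⟩ with hw
  have hwS : c.val ≤ (φ.f w).val := by
    by_contra h'
    have hwmem : w ∈ S := Finset.mem_filter.mpr ⟨Finset.mem_univ _, by omega⟩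
    have := Finset.le_max' S w hwmem
    rw [← hv, Fin.le_def] at this
    simp only [hw] at this
    omega
  have hwgt : c.val < (φ.f w).val := by
    rcases Nat.lt_or_ge c.val (φ.f w).val with h0 | h0
    · exact h0
    · exact absurd (Fin.ext (by omega : (φ.f w).val = c.val)) (h w)
  have hvw : v < w := by rw [Fin.lt_def]; simp only [hw]; omega
  obtain ⟨a, b, hab, hav, hwb⟩ := exists_bead_between T v w hvw
    (fun c' _ => by rw [Fin.le_def, Fin.le_def]; simp only [hw]; omega)
  obtain ⟨a', b', hab', hcont⟩ := φ.map_bead a b hab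
  have h1 := hcont v hav (le_trans (le_of_lt hvw) hwb)
  have h2 := hcont w (le_trans hav (le_of_lt hvw)) hwb
  rcases hab'.2.2.2 c hc with hle | hle <;>
    [ (have := h1.1; rw [Fin.le_def] at this hle; omega);
      (have := h2.2; rw [Fin.le_def] at this hle; omega) ]

lemma mem_J_of_map_mem {T T' : Necklace} (φ : Hom T T') (hinj : Function.Injective ⇑φ.f)
    {v : Fin (T.N + 1)} (hv : φ.f v ∈ T'.J) : v ∈ T.J := by
  by_contra h
  have hsm : StrictMono ⇑φ.f := φ.f.monotone.strictMono_of_injective hinj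
  have hv0 : v ≠ 0 := fun e => h (e ▸ T.zero_mem)
  have hvl : v ≠ Fin.last T.N := fun e => h (e ▸ T.last_mem)
  have hvN : v.val < T.N := by
    have h1 : v.val ≤ T.N := by omega
    rcases Nat.lt_or_ge v.val T.N with h0 | h0
    · exact h0
    · exact absurd (Fin.ext (by simp only [Fin.val_last]; omega)) hvl
  set w : Fin (T.N + 1) := ⟨v.val + 1, by omega⟩ with hw
  have hvw : v < w := by rw [Fin.lt_def]; simp only [hw]; omega
  obtain ⟨a, b, hab, hav, hwb⟩ := exists_bead_between T v w hvw
    (fun c' _ => by rw [Fin.le_def, Fin.le_def]; simp only [hw]; omega)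
  have halt : a < v := lt_of_le_of_ne hav (fun e => h (e ▸ hab.1))
  have hvb : v < b := lt_of_lt_of_le hvw hwb
  obtain ⟨a', b', hab', hcont⟩ := φ.map_bead a b hab
  have h1 := hcont a le_rfl (le_of_lt hab.2.2.1)
  have h2 := hcont b (le_of_lt hab.2.2.1) le_rfl
  have hfa := hsm halt
  have hfb := hsm hvb
  rcases hab'.2.2.2 _ hv with hle | hle
  · have := h1.1
    rw [Fin.le_def] at this hle
    rw [Fin.lt_def] at hfa
    omega
  · have := h2.2
    rw [Fin.le_def] at this hle
    rw [Fin.lt_def] at hfb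
    omega

end Necklace
namespace Necklace

lemma classify {T T' : Necklace} (φ : Hom T T') (hinj : Function.Injective ⇑φ.f)
    (hdim : T'.dim = T.dim + 1) : TypeIa φ ∨ TypeIb φ := by
  classical
  have hsm : StrictMono ⇑φ.f := φ.f.monotone.strictMono_of_injective hinj
  have hJ'sub : T'.J ⊆ T.J.image ⇑φ.f := by
    intro c hc
    obtain ⟨v, hv⟩ := joint_mem_range φ hc
    exact Finset.mem_image.mpr ⟨v, mem_J_of_map_mem φ hinj (hv ▸ hc), hv⟩
  have himg : (T.J.image ⇑φ.f).card = T.J.card := Finset.card_image_of_injective _ hinj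
  have hcard : T'.J.card ≤ T.J.card := himg ▸ Finset.card_le_card hJ'sub
  have hNle : T.N ≤ T'.N := by
    have := Fintype.card_le_of_injective _ hinj
    simpa using this
  have hJle : T.J.card ≤ T.N + 1 := by
    have := Finset.card_le_card (Finset.subset_univ T.J)
    simpa using this
  have hJ'le : T'.J.card ≤ T'.N + 1 := by
    have := Finset.card_le_card (Finset.subset_univ T'.J)
    simpa using this
  have hlast : (φ.f (Fin.last T.N)).val = T'.N := by rw [φ.map_last]; rfl
  unfold dim at hdim
  rcases (by omega : T'.N = T.N ∨ T'.N = T.N + 1) with hNN | hNN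
  · -- Type Ib
    right
    have hid : ∀ v, (φ.f v).val = v.val := eq_id_val hNN hsm hlast
    have hsubv : T'.J.image Fin.val ⊆ T.J.image Fin.val := by
      intro n hn
      obtain ⟨c, hc, hcn⟩ := Finset.mem_image.mp hn
      have hnlt : n < T.N + 1 := by rw [← hcn, ← hNN]; exact c.isLt
      have hfv : φ.f ⟨n, hnlt⟩ = c := Fin.ext (by rw [hid]; exact hcn.symm)
      exact Finset.mem_image.mpr ⟨⟨n, hnlt⟩, mem_J_of_map_mem φ hinj (hfv ▸ hc), rfl⟩
    have hcv : (T.J.image Fin.val).card = T.J.card := Finset.card_image_of_injective _ Fin.val_injective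
    have hcv' : (T'.J.image Fin.val).card = T'.J.card := Finset.card_image_of_injective _ Fin.val_injective
    have hone : (T.J.image Fin.val \ T'.J.image Fin.val).card = 1 := by
      rw [Finset.card_sdiff_of_subset hsubv, hcv, hcv']; omega
    obtain ⟨n, hn⟩ := Finset.card_eq_one.mp hone
    have hnmem : n ∈ T.J.image Fin.val \ T'.J.image Fin.val := hn ▸ Finset.mem_singleton_self n
    have hnJ := (Finset.mem_sdiff.mp hnmem).1
    have hnJ' := (Finset.mem_sdiff.mp hnmem).2
    have hnlt : n < T'.N + 1 := by
      obtain ⟨v, _, hvn⟩ := Finset.mem_image.mp hnJ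
      rw [← hvn, hNN]; exact v.isLt
    refine ⟨hinj, by unfold dim; omega, hNN, hid, ⟨n, hnlt⟩, ?_, ?_⟩
    · intro hmem
      exact hnJ' (Finset.mem_image.mpr ⟨_, hmem, rfl⟩)
    · have : T.J.image Fin.val = (T.J.image Fin.val \ T'.J.image Fin.val) ∪ T'.J.image Fin.val :=
        (Finset.sdiff_union_of_subset hsubv).symm
      rw [this, hn]
      exact (Finset.insert_eq _ _).symm
  · -- Type Ia
    left
    have hcards : T'.J.card = T.J.card := by omega
    have hJeq : T'.J = T.J.image ⇑φ.f :=
      Finset.eq_of_subset_of_card_le hJ'sub (by omega)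
    obtain ⟨t, htN, hform⟩ := exists_skip hNN hsm hlast
    have htlt : t < T'.N + 1 := by omega
    refine ⟨hinj, by unfold dim; omega, hNN, hJeq, ⟨t, htlt⟩, ?_, ?_⟩
    · intro hmem
      rw [hJeq] at hmem
      obtain ⟨v, _, hv⟩ := Finset.mem_image.mp hmem
      have := hform v
      have hval : (φ.f v).val = t := by rw [hv]
      by_cases hc : v.val < t <;> simp [hc] at this <;> omega
    · exact hform
end Necklace
namespace Necklace

lemma ext' {T₁ T₂ : Necklace} (hN : T₁.N = T₂.N)
    (hJ : T₁.J.image Fin.val = T₂.J.image Fin.val) : T₁ = T₂ := by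
  obtain ⟨N₁, p₁, J₁, z₁, l₁⟩ := T₁
  obtain ⟨N₂, p₂, J₂, z₂, l₂⟩ := T₂
  dsimp at hN hJ
  subst hN
  have : J₁ = J₂ := Finset.image_injective Fin.val_injective hJ
  subst this
  rfl

lemma hom_hext {T₁ T₂ T' : Necklace} (hT : T₁ = T₂) (φ₁ : Hom T₁ T') (φ₂ : Hom T₂ T')
    (h : ∀ n (h₁ : n < T₁.N + 1) (h₂ : n < T₂.N + 1), (φ₁.f ⟨n, h₁⟩).val = (φ₂.f ⟨n, h₂⟩).val) :
    HEq φ₁ φ₂ := by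
  subst hT
  apply heq_of_eq
  have hf : φ₁.f = φ₂.f := by
    apply OrderHom.ext
    funext v
    exact Fin.ext (h v.val v.isLt v.isLt)
  obtain ⟨f₁, z₁, l₁, b₁⟩ := φ₁
  obtain ⟨f₂, z₂, l₂, b₂⟩ := φ₂
  dsimp at hf
  subst hf
  rfl

lemma two_le_of_not_mem {T' : Necklace} {u : Fin (T'.N + 1)} (hu : u ∉ T'.J) : 2 ≤ T'.N := by
  have h0 : u ≠ 0 := fun e => hu (e ▸ T'.zero_mem)
  have hl : u ≠ Fin.last T'.N := fun e => hu (e ▸ T'.last_mem)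
  have h0v : u.val ≠ 0 := fun e => h0 (Fin.ext e)
  have hlv : u.val ≠ T'.N := fun e => hl (Fin.ext (by simp only [Fin.val_last]; exact e))
  have := u.isLt
  omega

variable (T' : Necklace)

def iaF (u : Fin (T'.N + 1)) (hu : u ∉ T'.J) : Fin (T'.N - 1 + 1) →o Fin (T'.N + 1) where
  toFun v := if v.val < u.val then ⟨v.val, by omega⟩ else
    ⟨v.val + 1, by have := two_le_of_not_mem hu; have := v.isLt; omega⟩
  monotone' := by
    intro a b hab
    rw [Fin.le_def] at hab
    rw [Fin.le_def]
    dsimp only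
    split_ifs <;> simp only <;> omega

lemma iaF_val (u : Fin (T'.N + 1)) (hu : u ∉ T'.J) (v : Fin (T'.N - 1 + 1)) :
    (iaF T' u hu v).val = if v.val < u.val then v.val else v.val + 1 := by
  unfold iaF
  show Fin.val (if v.val < u.val then (⟨v.val, _⟩ : Fin (T'.N + 1)) else ⟨v.val + 1, _⟩) = _
  split_ifs <;> rfl

lemma iaF_strictMono (u : Fin (T'.N + 1)) (hu : u ∉ T'.J) : StrictMono ⇑(iaF T' u hu) := by
  intro a b hab
  rw [Fin.lt_def] at hab ⊢
  rw [iaF_val, iaF_val]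
  split_ifs <;> omega

lemma iaF_surj (u : Fin (T'.N + 1)) (hu : u ∉ T'.J) (c : Fin (T'.N + 1)) (hc : c ≠ u) :
    ∃ w, iaF T' u hu w = c := by
  have h2 := two_le_of_not_mem hu
  have hcu : c.val ≠ u.val := fun e => hc (Fin.ext e)
  have hult : u.val < T'.N + 1 := u.isLt
  rcases Nat.lt_or_ge c.val u.val with h | h
  · refine ⟨⟨c.val, by omega⟩, Fin.ext ?_⟩
    rw [iaF_val]
    simp only
    rw [if_pos (by omega : c.val < u.val)]
  · have hc1 : 1 ≤ c.val := by omega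
    refine ⟨⟨c.val - 1, by have := c.isLt; omega⟩, Fin.ext ?_⟩
    rw [iaF_val]
    simp only
    rw [if_neg (by omega)]
    omega

lemma iaF_zero (u : Fin (T'.N + 1)) (hu : u ∉ T'.J) :
    iaF T' u hu 0 = 0 := by
  have hu0 : 0 < u.val := by
    rcases Nat.eq_zero_or_pos u.val with h | h
    · exact absurd (Fin.ext h : u = 0) (fun e => hu (e ▸ T'.zero_mem))
    · exact h
  apply Fin.ext
  rw [iaF_val]
  have e1 : (0 : Fin (T'.N - 1 + 1)).val = 0 := rfl
  have e2 : (0 : Fin (T'.N + 1)).val = 0 := rfl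
  split_ifs with h <;> omega

lemma iaF_last (u : Fin (T'.N + 1)) (hu : u ∉ T'.J) :
    iaF T' u hu (Fin.last (T'.N - 1)) = Fin.last T'.N := by
  have h2 := two_le_of_not_mem hu
  have hul : u.val ≤ T'.N - 1 := by
    have : u.val ≠ T'.N := fun e => hu (by
      rw [show u = Fin.last T'.N from Fin.ext (e.trans (Fin.val_last T'.N).symm)]
      exact T'.last_mem)
    have := u.isLt; omega
  apply Fin.ext
  rw [iaF_val]
  have e1 : (Fin.last (T'.N - 1)).val = T'.N - 1 := rfl
  have e2 : (Fin.last T'.N).val = T'.N := rfl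
  split_ifs with h <;> omega

def iaNeck (u : Fin (T'.N + 1)) (hu : u ∉ T'.J) : Necklace where
  N := T'.N - 1
  pos := by have := two_le_of_not_mem hu; omega
  J := Finset.univ.filter (fun v => iaF T' u hu v ∈ T'.J)
  zero_mem := by
    refine Finset.mem_filter.mpr ⟨Finset.mem_univ _, ?_⟩
    rw [iaF_zero T' u hu]; exact T'.zero_mem
  last_mem := by
    refine Finset.mem_filter.mpr ⟨Finset.mem_univ _, ?_⟩
    rw [iaF_last T' u hu]; exact T'.last_mem

def iaHom (u : Fin (T'.N + 1)) (hu : u ∉ T'.J) : Hom (iaNeck T' u hu) T' where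
  f := iaF T' u hu
  map_zero := iaF_zero T' u hu
  map_last := iaF_last T' u hu
  map_bead := by
    intro a b hab
    have hsm := iaF_strictMono T' u hu
    have haJ : iaF T' u hu a ∈ T'.J := ((Finset.mem_filter (s := (Finset.univ : Finset (Fin (T'.N - 1 + 1))))).mp (show a ∈ Finset.univ.filter (fun v : Fin (T'.N - 1 + 1) => iaF T' u hu v ∈ T'.J) from hab.1)).2
    have hbJ : iaF T' u hu b ∈ T'.J := ((Finset.mem_filter (s := (Finset.univ : Finset (Fin (T'.N - 1 + 1))))).mp (show b ∈ Finset.univ.filter (fun v : Fin (T'.N - 1 + 1) => iaF T' u hu v ∈ T'.J) from hab.2.1)).2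
    refine ⟨iaF T' u hu a, iaF T' u hu b, ⟨haJ, hbJ, hsm hab.2.2.1, ?_⟩, ?_⟩
    · intro c hc
      have hcu : c ≠ u := fun e => hu (e ▸ hc)
      obtain ⟨w, hw⟩ := iaF_surj T' u hu c hcu
      have hwJ : w ∈ (iaNeck T' u hu).J := Finset.mem_filter.mpr ⟨Finset.mem_univ _, hw ▸ hc⟩
      rcases hab.2.2.2 w hwJ with h | h
      · exact Or.inl (hw ▸ ((iaF T' u hu).monotone h))
      · exact Or.inr (hw ▸ ((iaF T' u hu).monotone h))
    · intro v hav hvb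
      exact ⟨(iaF T' u hu).monotone hav, (iaF T' u hu).monotone hvb⟩

lemma iaJ_card (u : Fin (T'.N + 1)) (hu : u ∉ T'.J) : T'.J.card ≤ T'.N := by
  classical
  have hsub : T'.J ⊆ Finset.univ.erase u := by
    intro c hc
    exact Finset.mem_erase.mpr ⟨fun e => hu (e ▸ hc), Finset.mem_univ _⟩
  have := Finset.card_le_card hsub
  rw [Finset.card_erase_of_mem (Finset.mem_univ _)] at this
  simpa using this

lemma ia_J_eq (u : Fin (T'.N + 1)) (hu : u ∉ T'.J) :
    T'.J = (iaNeck T' u hu).J.image ⇑(iaF T' u hu) := by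
  classical
  apply Finset.Subset.antisymm
  · intro c hc
    obtain ⟨w, hw⟩ := iaF_surj T' u hu c (fun e => hu (e ▸ hc))
    exact Finset.mem_image.mpr ⟨w, Finset.mem_filter.mpr ⟨Finset.mem_univ _, hw ▸ hc⟩, hw⟩
  · intro c hc
    obtain ⟨w, hwmem, hw⟩ := Finset.mem_image.mp hc
    exact hw ▸ (Finset.mem_filter.mp hwmem).2

lemma iaTypeIa (u : Fin (T'.N + 1)) (hu : u ∉ T'.J) : TypeIa (iaHom T' u hu) := by
  classical
  have h2 := two_le_of_not_mem hu
  have hinj : Function.Injective ⇑(iaHom T' u hu).f := (iaF_strictMono T' u hu).injective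
  have hJeq : T'.J = (iaNeck T' u hu).J.image ⇑(iaF T' u hu) := ia_J_eq T' u hu
  have hcards : (iaNeck T' u hu).J.card = T'.J.card := by
    rw [hJeq]; exact (Finset.card_image_of_injective _ (iaF_strictMono T' u hu).injective).symm
  have hJle := iaJ_card T' u hu
  refine ⟨hinj, ?_, by show T'.N = T'.N - 1 + 1; omega, hJeq, u, hu, ?_⟩
  · unfold dim
    show T'.N + 1 - T'.J.card = T'.N - 1 + 1 - (iaNeck T' u hu).J.card + 1
    rw [hcards]
    omega
  · intro v
    exact iaF_val T' u hu v

def ibNeck (u : Fin (T'.N + 1)) (hu : u ∉ T'.J) : Necklace where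
  N := T'.N
  pos := T'.pos
  J := insert u T'.J
  zero_mem := Finset.mem_insert_of_mem T'.zero_mem
  last_mem := Finset.mem_insert_of_mem T'.last_mem

def ibHom (u : Fin (T'.N + 1)) (hu : u ∉ T'.J) : Hom (ibNeck T' u hu) T' where
  f := OrderHom.id
  map_zero := rfl
  map_last := rfl
  map_bead := by
    intro a b hab
    obtain ⟨a', b', hab', ha', hb'⟩ := exists_bead_between T' a b hab.2.2.1
      (fun c hc => hab.2.2.2 c (Finset.mem_insert_of_mem hc))
    exact ⟨a', b', hab', fun v hav hvb => ⟨le_trans ha' hav, le_trans hvb hb'⟩⟩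

lemma ibTypeIb (u : Fin (T'.N + 1)) (hu : u ∉ T'.J) : TypeIb (ibHom T' u hu) := by
  classical
  have hJle := iaJ_card T' u hu
  refine ⟨fun a b h => h, ?_, rfl, fun v => rfl, u, hu, ?_⟩
  · unfold dim
    show T'.N + 1 - T'.J.card = T'.N + 1 - (insert u T'.J).card + 1
    rw [Finset.card_insert_of_notMem hu]
    omega
  · show (insert u T'.J).image Fin.val = _
    rw [Finset.image_insert]

end Necklace
namespace Necklace

lemma hom_hext_val {T₁ T₂ T' : Necklace} (hT : T₁ = T₂) {φ₁ : Hom T₁ T'} {φ₂ : Hom T₂ T'}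
    (h : HEq φ₁ φ₂) :
    ∀ n (h₁ : n < T₁.N + 1) (h₂ : n < T₂.N + 1), (φ₁.f ⟨n, h₁⟩).val = (φ₂.f ⟨n, h₂⟩).val := by
  subst hT
  cases h
  intro n h₁ h₂
  rfl

lemma skip_unique {M u₁ u₂ : ℕ} (h₁ : u₁ < M) (h₂ : u₂ < M)
    (h : ∀ v < M, (if v < u₁ then v else v + 1) = (if v < u₂ then v else v + 1)) :
    u₁ = u₂ := by
  by_contra hne
  have := h (min u₁ u₂) (by omega)
  split_ifs at this <;> omega

lemma val_lt_of_not_mem {T' : Necklace} {u : Fin (T'.N + 1)} (hu : u ∉ T'.J) :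
    u.val < T'.N := by
  have : u.val ≠ T'.N := fun e => hu (by
    rw [show u = Fin.last T'.N from Fin.ext (e.trans (Fin.val_last T'.N).symm)]
    exact T'.last_mem)
  have := u.isLt
  omega

variable (T' : Necklace)

lemma iaF_val' (u : Fin (T'.N + 1)) (hu : u ∉ T'.J) (n : ℕ) (hn : n < T'.N - 1 + 1) :
    ((iaF T' u hu) ⟨n, hn⟩).val = if n < u.val then n else n + 1 :=
  iaF_val T' u hu ⟨n, hn⟩

lemma ia_bijective :
    Function.Bijective (fun u : {u : Fin (T'.N + 1) // u ∉ T'.J} =>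
      (⟨⟨iaNeck T' u.1 u.2, iaHom T' u.1 u.2⟩, iaTypeIa T' u.1 u.2⟩ :
        {p : Σ T : Necklace, Hom T T' // TypeIa p.2})) := by
  constructor
  · rintro ⟨u₁, hu₁⟩ ⟨u₂, hu₂⟩ hFeq
    have h2 := two_le_of_not_mem hu₁
    have hs := congrArg Subtype.val hFeq
    simp only at hs
    rw [Sigma.ext_iff] at hs
    have hvals := hom_hext_val hs.1 hs.2
    refine Subtype.ext (Fin.ext ?_)
    refine skip_unique (val_lt_of_not_mem hu₁) (val_lt_of_not_mem hu₂) ?_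
    intro n hn
    have hn' : n < T'.N - 1 + 1 := by omega
    exact ((iaF_val' T' u₁ hu₁ n hn').symm.trans (hvals n hn' hn')).trans
      (iaF_val' T' u₂ hu₂ n hn')
  · rintro ⟨⟨T, φ⟩, hp⟩
    have hp2 : TypeIa φ := hp
    unfold TypeIa at hp2
    obtain ⟨hinj, hdim, hN, hJ, u, hu, hfval⟩ := hp2
    have h2 := two_le_of_not_mem hu
    refine ⟨⟨u, hu⟩, Subtype.ext ?_⟩
    show (⟨iaNeck T' u hu, iaHom T' u hu⟩ : Σ T : Necklace, Hom T T') = ⟨T, φ⟩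
    have hmem : ∀ v : Fin (T.N + 1), v ∈ T.J ↔ φ.f v ∈ T'.J := by
      intro v
      constructor
      · intro hv
        rw [hJ]
        exact Finset.mem_image.mpr ⟨v, hv, rfl⟩
      · intro hv
        rw [hJ] at hv
        obtain ⟨w, hw, hwe⟩ := Finset.mem_image.mp hv
        rwa [← hinj hwe]
    have hkey : ∀ n (h1 : n < T.N + 1) (h2' : n < T'.N - 1 + 1),
        φ.f ⟨n, h1⟩ = iaF T' u hu ⟨n, h2'⟩ := by
      intro n h1 h2'
      apply Fin.ext
      rw [iaF_val' T' u hu n h2']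
      exact hfval ⟨n, h1⟩
    have hNneck : (iaNeck T' u hu).N = T'.N - 1 := rfl
    have hT : iaNeck T' u hu = T := by
      apply ext'
      · show T'.N - 1 = T.N
        omega
      · ext n
        simp only [Finset.mem_image]
        constructor
        · rintro ⟨v, hv, rfl⟩
          have hvJ : iaF T' u hu v ∈ T'.J := ((Finset.mem_filter (s := (Finset.univ : Finset (Fin (T'.N - 1 + 1))))).mp (show v ∈ Finset.univ.filter (fun v : Fin (T'.N - 1 + 1) => iaF T' u hu v ∈ T'.J) from hv)).2
          have hn1 : v.val < T.N + 1 := by have := v.isLt; omega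
          refine ⟨⟨v.val, hn1⟩, ?_, rfl⟩
          rw [hmem, hkey v.val hn1 v.isLt]
          exact hvJ
        · rintro ⟨v, hv, rfl⟩
          have hv' := (hmem v).mp hv
          have hn2 : v.val < T'.N - 1 + 1 := by have := v.isLt; omega
          refine ⟨⟨v.val, hn2⟩, (show (⟨v.val, hn2⟩ : Fin (T'.N - 1 + 1)) ∈ Finset.univ.filter (fun v : Fin (T'.N - 1 + 1) => iaF T' u hu v ∈ T'.J) from Finset.mem_filter.mpr ⟨Finset.mem_univ _, ?_⟩), rfl⟩
          rw [← hkey v.val v.isLt hn2]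
          exact hv'
    subst hT
    have hΦ : iaHom T' u hu = φ := by
      have hh := hom_hext rfl (iaHom T' u hu) φ (by
        intro n h₁ h₂
        exact (iaF_val' T' u hu n h₁).trans (hfval ⟨n, h₂⟩).symm)
      exact eq_of_heq hh
    rw [hΦ]

lemma ib_bijective :
    Function.Bijective (fun u : {u : Fin (T'.N + 1) // u ∉ T'.J} =>
      (⟨⟨ibNeck T' u.1 u.2, ibHom T' u.1 u.2⟩, ibTypeIb T' u.1 u.2⟩ :
        {p : Σ T : Necklace, Hom T T' // TypeIb p.2})) := by
  constructor
  · rintro ⟨u₁, hu₁⟩ ⟨u₂, hu₂⟩ hFeq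
    have hs := congrArg Subtype.val hFeq
    simp only at hs
    have hT : ibNeck T' u₁ hu₁ = ibNeck T' u₂ hu₂ := congrArg Sigma.fst hs
    have hJm := congrArg (fun T : Necklace => T.J.image Fin.val) hT
    have hJm' : insert u₁.val (T'.J.image Fin.val) = insert u₂.val (T'.J.image Fin.val) := by
      have e1 : (ibNeck T' u₁ hu₁).J.image Fin.val = insert u₁.val (T'.J.image Fin.val) := by
        show (insert u₁ T'.J).image Fin.val = _
        rw [Finset.image_insert]
      have e2 : (ibNeck T' u₂ hu₂).J.image Fin.val = insert u₂.val (T'.J.image Fin.val) := by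
        show (insert u₂ T'.J).image Fin.val = _
        rw [Finset.image_insert]
      rw [← e1, ← e2]
      exact hJm
    have hmem : u₁.val ∈ insert u₂.val (T'.J.image Fin.val) := by
      rw [← hJm']
      exact Finset.mem_insert_self _ _
    rcases Finset.mem_insert.mp hmem with h | h
    · exact Subtype.ext (Fin.ext h)
    · exfalso
      obtain ⟨c, hc, hce⟩ := Finset.mem_image.mp h
      exact hu₁ (Fin.ext hce.symm ▸ hc)
  · rintro ⟨⟨T, φ⟩, hp⟩
    have hp2 : TypeIb φ := hp
    unfold TypeIb at hp2
    obtain ⟨hinj, hdim, hN, hid, u, hu, hJv⟩ := hp2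
    refine ⟨⟨u, hu⟩, Subtype.ext ?_⟩
    show (⟨ibNeck T' u hu, ibHom T' u hu⟩ : Σ T : Necklace, Hom T T') = ⟨T, φ⟩
    have hT : ibNeck T' u hu = T := by
      apply ext'
      · exact hN
      · show (insert u T'.J).image Fin.val = T.J.image Fin.val
        rw [Finset.image_insert, hJv]
    subst hT
    have hΦ : ibHom T' u hu = φ := by
      have hh := hom_hext rfl (ibHom T' u hu) φ (by
        intro n h₁ h₂
        exact (hid ⟨n, h₂⟩).symm)
      exact eq_of_heq hh
    rw [hΦ]

lemma card_not_mem : Nat.card {u : Fin (T'.N + 1) // u ∉ T'.J} = T'.dim := by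
  classical
  rw [Nat.card_eq_fintype_card, Fintype.card_subtype_compl]
  have h1 : Fintype.card (Fin (T'.N + 1)) = T'.N + 1 := Fintype.card_fin _
  have h2 : Fintype.card {u : Fin (T'.N + 1) // u ∈ T'.J} = T'.J.card := Fintype.card_coe _
  rw [h1, h2]
  rfl

end Necklace


open Necklace in
/-- Every injective necklace morphism raising dimension by exactly one is of exactly one of
the two kinds (ia) (an inner coface of one bead, identity on the others; forcing equal
numbers of beads) or (ib) (an Alexander–Whitney wedge inclusion on one bead, identity on
the others; forcing one more bead in the source).  Moreover for every necklace `T` of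
dimension `n` there are exactly `n` morphisms of type (ia) with target `T` and exactly `n`
morphisms of type (ib) with target `T`. -/
theorem injective_codimension_one_necklace_morphisms
    (T' : Necklace) :
    (∀ (T : Necklace) (φ : Hom T T'),
        Function.Injective φ.f → T'.dim = T.dim + 1 →
          (TypeIa φ ∨ TypeIb φ) ∧ ¬ (TypeIa φ ∧ TypeIb φ)) ∧
    Nat.card {p : Σ T : Necklace, Hom T T' // TypeIa p.2} = T'.dim ∧
    Nat.card {p : Σ T : Necklace, Hom T T' // TypeIb p.2} = T'.dim := by
  classical
  refine ⟨?_, ?_, ?_⟩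
  · intro T φ hinj hdim
    refine ⟨Necklace.classify φ hinj hdim, ?_⟩
    rintro ⟨ha, hb⟩
    unfold Necklace.TypeIa at ha
    unfold Necklace.TypeIb at hb
    obtain ⟨-, -, h3, -⟩ := ha
    obtain ⟨-, -, h3', -⟩ := hb
    omega
  · rw [← Necklace.card_not_mem T']
    exact (Nat.card_congr (Equiv.ofBijective _ (Necklace.ia_bijective T'))).symm
  · rw [← Necklace.card_not_mem T']
    exact (Nat.card_congr (Equiv.ofBijective _ (Necklace.ib_bijective T'))).symm
end
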